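/- Let $(X,\mu)$ and $(Y,\nu)$ be probability spaces, let $\lambda = \mu \times \nu$, and let $E \subseteq X \times Y$ be measurable with $\lambda(E) > 0$. Define $\tilde E = \{x \in X : \nu(\{y : (x,y) \in E\}) \ge \tfrac12 \lambda(E)\}$. Then there exists $y_0 \in Y$ such that $\lambda(\{(x,y) \in E : x \in \tilde E \text{ and } (x,y_0) \in E\}) \ge \tfrac18 \lambda(E)^2$. -/

import Mathlib

open MeasureTheory
open scoped ENNReal

theorem stmt0 {X Y : Type*} [MeasurableSpace X] [MeasurableSpace Y]
    (μ : Measure X) (ν : Measure Y) [IsProbabilityMeasure μ] [IsProbabilityMeasure ν]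
    (E : Set (X × Y)) (hE : MeasurableSet E) (hpos : 0 < (μ.prod ν) E) :
    ∃ y₀ : Y,
      (μ.prod ν) E ^ 2 / 8 ≤
        (μ.prod ν) {p : X × Y | p ∈ E ∧
          (μ.prod ν) E / 2 ≤ ν {y : Y | (p.1, y) ∈ E} ∧ (p.1, y₀) ∈ E} := by
  classical
  set a := (μ.prod ν) E with ha
  have hane : a ≠ ∞ := (measure_lt_top _ _).ne
  set f : X → ℝ≥0∞ := fun x => ν {y | (x, y) ∈ E} with hfdef
  have hfm : Measurable f := measurable_measure_prodMk_left hE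
  set T : Set X := {x | a / 2 ≤ f x} with hTdef
  have hTm : MeasurableSet T := measurableSet_le measurable_const hfm
  have hslice : ∀ x, MeasurableSet {y | (x, y) ∈ E} := fun x => measurable_prodMk_left hE
  have hint : ∫⁻ x, f x ∂μ = a := by
    rw [ha, Measure.prod_apply hE]; rfl
  -- lower bound ∫_T f ≥ a/2
  have hcompl : ∫⁻ x, Tᶜ.indicator f x ∂μ ≤ a / 2 := by
    rw [lintegral_indicator hTm.compl f]
    calc ∫⁻ x in Tᶜ, f x ∂μ ≤ ∫⁻ _ in Tᶜ, a / 2 ∂μ := by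
          refine setLIntegral_mono measurable_const fun x hx => ?_
          exact le_of_not_ge hx
      _ = a / 2 * μ Tᶜ := by simp [mul_comm]
      _ ≤ a / 2 * 1 := by gcongr; exact prob_le_one
      _ = a / 2 := mul_one _
  have hTf : a / 2 ≤ ∫⁻ x, T.indicator f x ∂μ := by
    have hsplit : ∫⁻ x, T.indicator f x ∂μ + ∫⁻ x, Tᶜ.indicator f x ∂μ = a := by
      rw [← lintegral_add_left (hfm.indicator hTm), ← hint]
      congr 1
      ext x
      by_cases hx : x ∈ T <;> simp [Set.indicator, hx]
    have h2 : a ≤ (∫⁻ x, T.indicator f x ∂μ) + a / 2 := by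
      conv_lhs => rw [← hsplit]
      gcongr
    have h3 : a / 2 + a / 2 ≤ (∫⁻ x, T.indicator f x ∂μ) + a / 2 := by
      rw [ENNReal.add_halves]; exact h2
    exact (ENNReal.add_le_add_iff_right (ENNReal.div_lt_top hane (by norm_num)).ne).mp h3
  -- the function of y₀
  set S : Y → Set (X × Y) := fun y₀ => {p : X × Y | p ∈ E ∧
      a / 2 ≤ ν {y : Y | (p.1, y) ∈ E} ∧ (p.1, y₀) ∈ E} with hSdef
  have hSm : ∀ y₀, MeasurableSet (S y₀) := by
    intro y₀
    have h1 : MeasurableSet {p : X × Y | a / 2 ≤ f p.1} := (hTm.preimage measurable_fst)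
    have h2 : MeasurableSet {p : X × Y | (p.1, y₀) ∈ E} :=
      hE.preimage (measurable_fst.prodMk measurable_const)
    exact hE.inter (h1.inter h2)
  set g : X → Y → ℝ≥0∞ := fun x y => T.indicator f x * E.indicator 1 (x, y) with hgdef
  have hgm : Measurable (Function.uncurry g) := by
    apply Measurable.mul
    · exact (hfm.indicator hTm).comp measurable_fst
    · exact (measurable_one.indicator hE)
  have hFS : ∀ y₀, (μ.prod ν) (S y₀) = ∫⁻ x, g x y₀ ∂μ := by
    intro y₀
    rw [Measure.prod_apply (hSm y₀)]
    congr 1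
    ext x
    by_cases hx : x ∈ T
    · by_cases hxy : (x, y₀) ∈ E
      · have : (Prod.mk x ⁻¹' S y₀) = {y | (x, y) ∈ E} := by
          ext y; simp [hSdef, Set.mem_preimage, hx.out, hxy]
          exact fun h => ⟨h, hx.out⟩
        simp [hgdef, this, Set.indicator_of_mem hx, Set.indicator_of_mem hxy, hfdef]
      · have : (Prod.mk x ⁻¹' S y₀) = ∅ := by
          ext y; simp [hSdef, Set.mem_preimage, hxy]
        simp [hgdef, this, Set.indicator_of_notMem hxy]
    · have : (Prod.mk x ⁻¹' S y₀) = ∅ := by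
        ext y; simp only [hSdef, Set.mem_preimage, Set.mem_setOf_eq, Set.mem_empty_iff_false,
          iff_false]
        rintro ⟨-, h2, -⟩; exact hx h2
      simp [hgdef, this, Set.indicator_of_notMem hx]
  -- average over y₀
  have hswap : ∫⁻ y₀, (μ.prod ν) (S y₀) ∂ν = ∫⁻ x, T.indicator f x * f x ∂μ := by
    calc ∫⁻ y₀, (μ.prod ν) (S y₀) ∂ν = ∫⁻ y₀, ∫⁻ x, g x y₀ ∂μ ∂ν := by
          simp_rw [hFS]
      _ = ∫⁻ x, ∫⁻ y, g x y ∂ν ∂μ := (lintegral_lintegral_swap hgm.aemeasurable).symm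
      _ = ∫⁻ x, T.indicator f x * f x ∂μ := by
          refine lintegral_congr fun x => ?_
          have hm : Measurable fun y => E.indicator (1 : X × Y → ℝ≥0∞) (x, y) :=
            (measurable_one.indicator hE).comp measurable_prodMk_left
          simp only [hgdef]
          rw [lintegral_const_mul _ hm]
          congr 1
          have : ∀ y, E.indicator (1 : X × Y → ℝ≥0∞) (x, y)
              = ({y | (x, y) ∈ E}).indicator (1 : Y → ℝ≥0∞) y := by
            intro y
            by_cases hy : (x, y) ∈ E <;> simp [Set.indicator, hy]
          simp_rw [this]
          rw [lintegral_indicator_one (hslice x)]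
  have hlow : a ^ 2 / 4 ≤ ∫⁻ y₀, (μ.prod ν) (S y₀) ∂ν := by
    rw [hswap]
    have h2 : ((2 : ℝ≥0∞))⁻¹ * 2⁻¹ = 4⁻¹ := by
      rw [← ENNReal.mul_inv (by norm_num) (by norm_num)]; norm_num
    calc a ^ 2 / 4 = a / 2 * (a / 2) := by
          rw [sq, div_eq_mul_inv, div_eq_mul_inv, ← h2]; ring
      _ ≤ a / 2 * ∫⁻ x, T.indicator f x ∂μ := by gcongr
      _ = ∫⁻ x, a / 2 * T.indicator f x ∂μ := (lintegral_const_mul _ (hfm.indicator hTm)).symm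
      _ ≤ ∫⁻ x, T.indicator f x * f x ∂μ := by
          refine lintegral_mono fun x => ?_
          by_cases hx : x ∈ T
          · simp only [Set.indicator_of_mem hx]
            exact mul_le_mul_left hx.out _ |>.trans (by rw [mul_comm])
          · simp [Set.indicator_of_notMem hx]
  by_contra hc
  push_neg at hc
  have hup : ∫⁻ y₀, (μ.prod ν) (S y₀) ∂ν ≤ a ^ 2 / 8 := by
    calc ∫⁻ y₀, (μ.prod ν) (S y₀) ∂ν ≤ ∫⁻ _, a ^ 2 / 8 ∂ν :=
          lintegral_mono fun y₀ => (hc y₀).le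
      _ = a ^ 2 / 8 := by simp
  have hfin : a ^ 2 ≠ ∞ := ENNReal.pow_ne_top hane
  have hne : a ^ 2 ≠ 0 := pow_ne_zero _ hpos.ne'
  have h48 : a ^ 2 / 4 ≤ a ^ 2 / 8 := hlow.trans hup
  rw [div_eq_mul_inv, div_eq_mul_inv, ENNReal.mul_le_mul_iff_right hne hfin] at h48
  have : (8 : ℝ≥0∞) ≤ 4 := by
    rw [← ENNReal.inv_le_inv]; exact h48
  norm_num at this
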